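/- The power series ∑_{n=0}^∞ T(n) h^n, where T(0)=0 and 2T(n+1) − T(n) = (1/2)_n/n!, equals h / ((2−h)·√(1−h)) for |h| < 1. -/

import Mathlib

set_option maxHeartbeats 1000000


/-- Pochhammer symbol (rising factorial) `(x)_n`. -/
noncomputable def poch (x : ℝ) (n : ℕ) : ℝ := (ascPochhammer ℝ n).eval x

namespace Stmt9Aux

noncomputable def a (n : ℕ) : ℝ := poch (1/2) n / n.factorial

lemma a_zero : a 0 = 1 := by simp [a, poch]

lemma poch_succ (x : ℝ) (n : ℕ) : poch x (n+1) = poch x n * (x + n) := by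
  simp [poch, ascPochhammer_succ_right]

lemma a_succ (n : ℕ) : a (n+1) = a n * (((n:ℝ) + 1/2) / ((n:ℝ)+1)) := by
  rw [a, a, poch_succ, Nat.factorial_succ]
  have hn : ((n:ℝ)+1) ≠ 0 := by positivity
  have hf : ((n.factorial : ℝ)) ≠ 0 := by positivity
  push_cast
  field_simp
  ring

lemma a_nonneg (n : ℕ) : 0 ≤ a n := by
  induction n with
  | zero => rw [a_zero]; norm_num
  | succ n ih =>
    rw [a_succ]
    have h1 : (0:ℝ) ≤ ((n:ℝ) + 1/2) / ((n:ℝ)+1) := by positivity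
    exact mul_nonneg ih h1

lemma a_succ_le (n : ℕ) : a (n+1) ≤ a n := by
  rw [a_succ]
  have h2 : (0:ℝ) < (n:ℝ)+1 := by positivity
  have : ((n:ℝ) + 1/2) / ((n:ℝ)+1) ≤ 1 := by
    rw [div_le_one h2]; linarith
  nlinarith [a_nonneg n]

lemma a_le_one (n : ℕ) : a n ≤ 1 := by
  induction n with
  | zero => rw [a_zero]
  | succ n ih => exact le_trans (a_succ_le n) ih

lemma a_mul_succ (n : ℕ) : ((n:ℝ)+1) * a (n+1) = ((n:ℝ) + 1/2) * a n := by
  rw [a_succ]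
  have hn : ((n:ℝ)+1) ≠ 0 := by positivity
  field_simp

/-- symmetrization: `2 D n = n c n`. -/
lemma two_D (n : ℕ) :
    2 * ∑ m ∈ Finset.range (n+1), (m:ℝ) * a m * a (n-m)
      = (n:ℝ) * ∑ m ∈ Finset.range (n+1), a m * a (n-m) := by
  have hre : ∑ m ∈ Finset.range (n+1), (m:ℝ) * a m * a (n-m)
      = ∑ m ∈ Finset.range (n+1), ((n:ℝ)-(m:ℝ)) * a m * a (n-m) := by
    rw [← Finset.sum_range_reflect (fun m => (m:ℝ) * a m * a (n-m)) (n+1)]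
    apply Finset.sum_congr rfl
    intro m hm
    have hm' : m ≤ n := by
      have := Finset.mem_range.mp hm; omega
    have h0 : n + 1 - 1 - m = n - m := by omega
    have h1 : n - (n - m) = m := by omega
    have h2 : ((n - m : ℕ) : ℝ) = (n:ℝ) - (m:ℝ) := by
      rw [Nat.cast_sub hm']
    rw [h0, h1, h2]
    ring
  rw [two_mul]
  nth_rewrite 2 [hre]
  rw [← Finset.sum_add_distrib, Finset.mul_sum]
  apply Finset.sum_congr rfl
  intro m _
  ring

lemma D_succ (n : ℕ) :
    ∑ m ∈ Finset.range (n+2), (m:ℝ) * a m * a (n+1-m)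
      = (∑ m ∈ Finset.range (n+1), (m:ℝ) * a m * a (n-m))
        + (1/2) * ∑ m ∈ Finset.range (n+1), a m * a (n-m) := by
  rw [Finset.sum_range_succ' (fun m => (m:ℝ) * a m * a (n+1-m)) (n+1)]
  simp only [Nat.cast_zero, zero_mul]
  rw [add_zero]
  have : ∀ i ∈ Finset.range (n+1),
      ((i+1 : ℕ):ℝ) * a (i+1) * a (n+1-(i+1))
        = (i:ℝ) * a i * a (n-i) + (1/2) * (a i * a (n-i)) := by
    intro i _
    have h1 : n + 1 - (i+1) = n - i := by omega
    have h2 : ((i+1 : ℕ):ℝ) = (i:ℝ) + 1 := by push_cast; ring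
    rw [h1, h2, a_mul_succ i]
    ring
  rw [Finset.sum_congr rfl this, Finset.sum_add_distrib, ← Finset.mul_sum]

lemma c_eq_one (n : ℕ) : ∑ m ∈ Finset.range (n+1), a m * a (n-m) = 1 := by
  induction n with
  | zero => simp [a_zero]
  | succ n ih =>
    have key : ((n:ℝ)+1) * ∑ m ∈ Finset.range (n+2), a m * a (n+1-m)
        = ((n:ℝ)+1) * 1 := by
      have h1 := two_D (n+1)
      have h2 := D_succ n
      have h3 := two_D n
      push_cast at h1
      rw [h2] at h1
      rw [ih] at h1 h3
      linarith
    have hne : ((n:ℝ)+1) ≠ 0 := by positivity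
    have := mul_left_cancel₀ hne key
    simpa using this

end Stmt9Aux

open Stmt9Aux in
theorem stmt9 (T : ℕ → ℝ) (hT0 : T 0 = 0)
    (hTrec : ∀ n : ℕ, 2 * T (n + 1) - T n = poch (1/2) n / n.factorial)
    (h : ℝ) (hh : |h| < 1) :
    ∑' n : ℕ, T n * h ^ n = h / ((2 - h) * Real.sqrt (1 - h)) := by
  have hTrec' : ∀ n : ℕ, 2 * T (n + 1) - T n = a n := hTrec
  have hgeo : Summable (fun n : ℕ => |h| ^ n) :=
    summable_geometric_of_lt_one (abs_nonneg h) hh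
  have h1h : (0:ℝ) < 1 - h := by
    have := abs_lt.mp hh; linarith
  have hsqrt_pos : 0 < Real.sqrt (1 - h) := Real.sqrt_pos.mpr h1h
  -- summability of the `a` series, with norms
  have haabs : Summable (fun n : ℕ => |a n * h ^ n|) := by
    apply Summable.of_nonneg_of_le (fun n => abs_nonneg _) _ hgeo
    intro n
    rw [abs_mul, abs_pow]
    have h1 : |a n| ≤ 1 := by
      rw [abs_of_nonneg (a_nonneg n)]; exact a_le_one n
    calc |a n| * |h| ^ n ≤ 1 * |h| ^ n := by
          apply mul_le_mul_of_nonneg_right h1 (by positivity)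
      _ = |h| ^ n := one_mul _
  have hsa : Summable (fun n : ℕ => a n * h ^ n) := haabs.of_abs
  set S : ℝ := ∑' n : ℕ, a n * h ^ n with hS
  -- S² = (1-h)⁻¹
  have hsq : S * S = (1 - h)⁻¹ := by
    have hnorm : Summable (fun n : ℕ => ‖a n * h ^ n‖) := by
      simpa only [Real.norm_eq_abs] using haabs
    have := tsum_mul_tsum_eq_tsum_sum_range_of_summable_norm hnorm hnorm
    rw [hS, this]
    have hterm : ∀ n : ℕ, (∑ k ∈ Finset.range (n+1),
        (a k * h ^ k) * (a (n-k) * h ^ (n-k))) = h ^ n := by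
      intro n
      have : ∀ k ∈ Finset.range (n+1),
          (a k * h ^ k) * (a (n-k) * h ^ (n-k)) = (a k * a (n-k)) * h ^ n := by
        intro k hk
        have hk' : k ≤ n := by
          have := Finset.mem_range.mp hk; omega
        rw [show (a k * h ^ k) * (a (n-k) * h ^ (n-k))
            = (a k * a (n-k)) * (h ^ k * h ^ (n-k)) by ring,
          ← pow_add, Nat.add_sub_cancel' hk']
      rw [Finset.sum_congr rfl this, ← Finset.sum_mul, c_eq_one n, one_mul]
    calc ∑' n : ℕ, (∑ k ∈ Finset.range (n+1),
          (a k * h ^ k) * (a (n-k) * h ^ (n-k)))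
        = ∑' n : ℕ, h ^ n := by exact tsum_congr hterm
      _ = (1 - h)⁻¹ := tsum_geometric_of_norm_lt_one (by simpa [Real.norm_eq_abs] using hh)
  -- S > 0
  have hSpos : 0 < S := by
    rcases le_or_gt 0 h with hpos | hneg
    · have : a 0 * h ^ 0 ≤ S := by
        apply Summable.le_tsum hsa 0
        intro j _
        have : 0 ≤ h ^ j := pow_nonneg hpos j
        exact mul_nonneg (a_nonneg j) this
      rw [a_zero] at this
      simp at this
      linarith
    · -- h < 0 : even/odd split
      set t : ℝ := -h with ht
      have ht0 : 0 < t := by simp [ht]; linarith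
      have ht1 : t < 1 := by
        have := abs_lt.mp hh; simp [ht]; linarith
      have hinj2 : Function.Injective (fun k : ℕ => 2 * k) := fun x y hxy => by dsimp only at hxy; omega
      have hinj2' : Function.Injective (fun k : ℕ => 2 * k + 1) := fun x y hxy => by dsimp only at hxy; omega
      have he : Summable (fun k : ℕ => a (2*k) * h ^ (2*k)) := by
        exact hsa.comp_injective hinj2
      have ho : Summable (fun k : ℕ => a (2*k+1) * h ^ (2*k+1)) := by
        exact hsa.comp_injective hinj2'
      have hsplit : (∑' k : ℕ, a (2*k) * h ^ (2*k)) + ∑' k : ℕ, a (2*k+1) * h ^ (2*k+1) = S :=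
        tsum_even_add_odd (f := fun n : ℕ => a n * h ^ n) he ho
      set A : ℝ := ∑' k : ℕ, a (2*k) * h ^ (2*k) with hA
      set B : ℝ := ∑' k : ℕ, a (2*k+1) * h ^ (2*k+1) with hB
      have hheven : ∀ k : ℕ, h ^ (2*k) = t ^ (2*k) := by
        intro k
        rw [show h = -t by simp [ht], neg_pow, Even.neg_one_pow ⟨k, by ring⟩, one_mul]
      have hhodd : ∀ k : ℕ, h ^ (2*k+1) = -(t ^ (2*k+1)) := by
        intro k
        rw [show h = -t by simp [ht], neg_pow, Odd.neg_one_pow ⟨k, by ring⟩, neg_one_mul]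
      have hA1 : 1 ≤ A := by
        have : a 0 * h ^ (2*0) ≤ A := by
          apply Summable.le_tsum he 0
          intro j _
          have : 0 ≤ h ^ (2*j) := by rw [hheven]; positivity
          exact mul_nonneg (a_nonneg _) this
        simpa [a_zero] using this
      have hBbound : -B ≤ t * A := by
        have : -B = ∑' k : ℕ, a (2*k+1) * t ^ (2*k+1) := by
          rw [hB, ← tsum_neg]
          apply tsum_congr
          intro k
          rw [hhodd k]; ring
        rw [this, hA, ← tsum_mul_left]
        apply Summable.tsum_le_tsum _ _ (he.mul_left t)
        · intro k
          have h1 : a (2*k+1) ≤ a (2*k) := a_succ_le (2*k)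
          have h2 : t ^ (2*k+1) = t * t ^ (2*k) := by ring
          rw [h2, hheven k]
          have h3 : (0:ℝ) ≤ t ^ (2*k) := by positivity
          calc a (2*k+1) * (t * t ^ (2*k)) ≤ a (2*k) * (t * t ^ (2*k)) := by
                apply mul_le_mul_of_nonneg_right h1 (by positivity)
            _ = t * (a (2*k) * t ^ (2*k)) := by ring
        · have : Summable (fun k : ℕ => -(a (2*k+1) * h ^ (2*k+1))) := ho.neg
          apply this.congr
          intro k
          rw [hhodd k]; ring
      have : (1 - t) * A ≤ S := by
        rw [← hsplit]
        have : -B ≤ t * A := hBbound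
        linarith
      have hApos : 0 < (1-t) * A := by
        apply mul_pos (by linarith) (by linarith)
      linarith
  -- S = (√(1-h))⁻¹
  have hSval : S = (Real.sqrt (1 - h))⁻¹ := by
    have h1 : Real.sqrt (S * S) = Real.sqrt ((1 - h)⁻¹) := by rw [hsq]
    rwa [Real.sqrt_mul_self hSpos.le, Real.sqrt_inv] at h1
  -- bounds on T
  have hTb : ∀ n : ℕ, 0 ≤ T n ∧ T n ≤ 1 := by
    intro n
    induction n with
    | zero => rw [hT0]; exact ⟨le_refl 0, zero_le_one⟩
    | succ n ih =>
      have hrec := hTrec' n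
      have h1 := a_nonneg n
      have h2 := a_le_one n
      constructor <;> linarith [ih.1, ih.2]
  have hsT : Summable (fun n : ℕ => T n * h ^ n) := by
    apply Summable.of_abs
    apply Summable.of_nonneg_of_le (fun n => abs_nonneg _) _ hgeo
    intro n
    rw [abs_mul, abs_pow]
    have h1 : |T n| ≤ 1 := abs_le.mpr ⟨by linarith [(hTb n).1], (hTb n).2⟩
    calc |T n| * |h| ^ n ≤ 1 * |h| ^ n :=
          mul_le_mul_of_nonneg_right h1 (by positivity)
      _ = |h| ^ n := one_mul _
  set F : ℝ := ∑' n : ℕ, T n * h ^ n with hF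
  -- the functional equation
  have hkey : 2 * F = h * F + h * S := by
    have hshift : F = ∑' n : ℕ, T (n+1) * h ^ (n+1) := by
      rw [hF, Summable.tsum_eq_zero_add hsT, hT0]
      simp
    have hs1 : Summable (fun n : ℕ => T (n+1) * h ^ (n+1)) := by
      have := (summable_nat_add_iff 1).mpr hsT
      exact this
    calc 2 * F = 2 * ∑' n : ℕ, T (n+1) * h ^ (n+1) := by rw [← hshift]
      _ = ∑' n : ℕ, 2 * (T (n+1) * h ^ (n+1)) := by rw [tsum_mul_left]
      _ = ∑' n : ℕ, (T n * h ^ n * h + a n * h ^ n * h) := by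
          apply tsum_congr
          intro n
          have hrec := hTrec' n
          have : 2 * T (n+1) = T n + a n := by linarith
          rw [show 2 * (T (n+1) * h ^ (n+1)) = (2 * T (n+1)) * h ^ (n+1) by ring, this]
          ring
      _ = (∑' n : ℕ, T n * h ^ n * h) + ∑' n : ℕ, a n * h ^ n * h :=
          Summable.tsum_add (hsT.mul_right h) (hsa.mul_right h)
      _ = h * F + h * S := by
          rw [tsum_mul_right, tsum_mul_right, hF, hS]; ring
  -- solve
  have h2h : (0:ℝ) < 2 - h := by
    have := abs_lt.mp hh; linarith
  rw [hSval] at hkey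
  have hsne : Real.sqrt (1 - h) ≠ 0 := ne_of_gt hsqrt_pos
  have h2ne : (2 - h) ≠ 0 := ne_of_gt h2h
  have hne : (2 - h) * Real.sqrt (1 - h) ≠ 0 := mul_ne_zero h2ne hsne
  rw [eq_div_iff hne]
  have h1 : F * (2 - h) = h * (Real.sqrt (1-h))⁻¹ := by linarith
  calc F * ((2-h) * Real.sqrt (1-h)) = (F * (2-h)) * Real.sqrt (1-h) := by ring
    _ = h * ((Real.sqrt (1-h))⁻¹ * Real.sqrt (1-h)) := by rw [h1]; ring
    _ = h := by rw [inv_mul_cancel₀ hsne, mul_one]
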